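/- Let (Ω, 𝔽, ℙ) be a probability space, N ≥ 1, and let S, Z and X₁, …, X_N : Ω → ℝ be (mutually) independent random variables in L², each with mean zero, with E[S²] = Q, E[X_i²] = γ_i·P_i, E[Z²] = σ², where Q, σ² > 0, each P_i > 0, each γ_i ∈ [0,1], and let α ≥ 0. Set c = α + Σ_i √((1−γ_i)·P_i/Q) and Y = Σ_i X_i + c·S + Z. Then min over a ∈ ℝ of E[(S − a·Y)²] equals Q·(σ² + Σ_i γ_i·P_i)/(σ² + Σ_i γ_i·P_i + (α·√Q + Σ_i √((1−γ_i)·P_i))²). (This is the achievable-distortion computation for the N-sender Gaussian MAC, the right-hand side of equation (14) of the paper.) -/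

import Mathlib

open MeasureTheory ProbabilityTheory

theorem stmt_12 {Ω : Type*} [MeasurableSpace Ω] (μ : Measure Ω) [IsProbabilityMeasure μ]
    (N : ℕ) (hN : 1 ≤ N) (S Z : Ω → ℝ) (X : Fin N → Ω → ℝ)
    (hindep : iIndepFun (Sum.elim X ![S, Z]) μ)
    (hSL2 : MemLp S 2 μ) (hZL2 : MemLp Z 2 μ) (hXL2 : ∀ i, MemLp (X i) 2 μ)
    (hSmean : ∫ ω, S ω ∂μ = 0) (hZmean : ∫ ω, Z ω ∂μ = 0)
    (hXmean : ∀ i, ∫ ω, X i ω ∂μ = 0)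
    (Q σ2 α : ℝ) (P γ : Fin N → ℝ) (hQ : 0 < Q) (hσ : 0 < σ2) (hα : 0 ≤ α)
    (hP : ∀ i, 0 < P i) (hγ : ∀ i, γ i ∈ Set.Icc (0:ℝ) 1)
    (hSvar : ∫ ω, (S ω) ^ 2 ∂μ = Q) (hZvar : ∫ ω, (Z ω) ^ 2 ∂μ = σ2)
    (hXvar : ∀ i, ∫ ω, (X i ω) ^ 2 ∂μ = γ i * P i)
    (c : ℝ) (hc : c = α + ∑ i, Real.sqrt ((1 - γ i) * P i / Q))
    (Y : Ω → ℝ) (hY : Y = fun ω => (∑ i, X i ω) + c * S ω + Z ω) :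
    IsLeast {e : ℝ | ∃ a : ℝ, e = ∫ ω, (S ω - a * Y ω) ^ 2 ∂μ}
      (Q * (σ2 + ∑ i, γ i * P i)
        / (σ2 + (∑ i, γ i * P i)
            + (α * Real.sqrt Q + ∑ i, Real.sqrt ((1 - γ i) * P i)) ^ 2)) := by
  classical
  set G : ℝ := ∑ i, γ i * P i with hG
  set V : ℝ := σ2 + G + c ^ 2 * Q with hV
  -- basic positivity
  have hGnn : 0 ≤ G := Finset.sum_nonneg fun i _ => mul_nonneg (hγ i).1 (hP i).le
  have hVpos : 0 < V := by positivity
  -- the family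
  set g : Fin N ⊕ Fin 2 → Ω → ℝ := Sum.elim X ![S, Z] with hg
  have hgL2 : ∀ k, MemLp (g k) 2 μ := by
    rintro (i | j)
    · exact hXL2 i
    · fin_cases j <;> simpa [hg] using (by assumption : MemLp _ 2 μ)
  -- key: for each a, the integral equals Q - 2*a*(c*Q) + a^2 * V
  have key : ∀ a : ℝ, ∫ ω, (S ω - a * Y ω) ^ 2 ∂μ = Q - 2 * a * (c * Q) + a ^ 2 * V := by
    intro a
    -- coefficients
    set d : Fin N ⊕ Fin 2 → ℝ := Sum.elim (fun _ => -a) ![1 - a * c, -a] with hd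
    set W : Fin N ⊕ Fin 2 → Ω → ℝ := fun k ω => d k * g k ω with hW
    have hWL2 : ∀ k, MemLp (W k) 2 μ := fun k => (hgL2 k).const_mul _
    have hsum : (fun ω => S ω - a * Y ω) = ∑ k, W k := by
      funext ω
      simp only [hY, hW, Finset.sum_apply, Fintype.sum_sum_type, Fin.sum_univ_two, hd, hg,
        Sum.elim_inl, Sum.elim_inr, Matrix.cons_val_zero, Matrix.cons_val_one, Matrix.head_cons]
      rw [← Finset.mul_sum]
      ring
    have hWmean : ∀ k, ∫ ω, W k ω ∂μ = 0 := by
      rintro (i | j)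
      · simp [hW, integral_const_mul, hXmean i, hg]
      · fin_cases j <;>
        simp [hW, integral_const_mul, hg, hSmean, hZmean]
    have hWvar : ∀ k, variance (W k) μ = d k ^ 2 * ∫ ω, g k ω ^ 2 ∂μ := by
      intro k
      have h1 : variance (W k) μ = d k ^ 2 * variance (g k) μ := variance_const_mul (d k) (g k) μ
      have h2 : variance (g k) μ = (∫ ω, g k ω ^ 2 ∂μ) - (∫ ω, g k ω ∂μ) ^ 2 := by
        simpa using variance_eq_sub (hgL2 k)
      have h3 : ∫ ω, g k ω ∂μ = 0 := by
        rcases k with i | j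
        · exact hXmean i
        · fin_cases j <;> simpa [hg] using (by assumption : (_ : ℝ) = 0)
      rw [h1, h2, h3]; ring
    have hpair : Set.Pairwise ↑(Finset.univ : Finset (Fin N ⊕ Fin 2))
        fun i j => IndepFun (W i) (W j) μ := by
      intro i _ j _ hij
      exact (hindep.indepFun hij).comp (measurable_const_mul (d i)) (measurable_const_mul (d j))
    have hvarsum : variance (∑ k, W k) μ = ∑ k, variance (W k) μ :=
      IndepFun.variance_sum (fun k _ => hWL2 k) hpair
    have hFL2 : MemLp (∑ k, W k) 2 μ := memLp_finset_sum' _ fun k _ => hWL2 k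
    have hFmean : ∫ ω, (∑ k, W k) ω ∂μ = 0 := by
      simp only [Finset.sum_apply]
      rw [integral_finset_sum _ fun k _ => ((hWL2 k).integrable one_le_two)]
      simp [hWmean]
    have hFvar : variance (∑ k, W k) μ = (∫ ω, ((∑ k, W k) ω) ^ 2 ∂μ)
        - (∫ ω, (∑ k, W k) ω ∂μ) ^ 2 := by
      simpa using variance_eq_sub hFL2
    have : ∫ ω, (S ω - a * Y ω) ^ 2 ∂μ = ∑ k, variance (W k) μ := by
      rw [← hvarsum, hFvar, hFmean]
      have : (fun ω => (S ω - a * Y ω) ^ 2) = fun ω => ((∑ k, W k) ω) ^ 2 := by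
        funext ω; rw [← hsum]
      rw [this]; ring
    rw [this]
    have : ∑ k, variance (W k) μ
        = (∑ i : Fin N, a ^ 2 * (γ i * P i)) + ((1 - a * c) ^ 2 * Q + a ^ 2 * σ2) := by
      rw [Fintype.sum_sum_type, Fin.sum_univ_two]
      congr 1
      · apply Finset.sum_congr rfl
        intro i _
        rw [hWvar (Sum.inl i)]
        simp [hd, hg, hXvar i]
      · rw [hWvar (Sum.inr 0), hWvar (Sum.inr 1)]
        simp [hd, hg, hSvar, hZvar]
    rw [this, ← Finset.mul_sum, ← hG, hV]
    ring
  -- identify the denominator with V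
  have hcQ : c * Real.sqrt Q = α * Real.sqrt Q + ∑ i, Real.sqrt ((1 - γ i) * P i) := by
    rw [hc, add_mul, Finset.sum_mul]
    congr 1
    apply Finset.sum_congr rfl
    intro i _
    rw [← Real.sqrt_mul (div_nonneg (mul_nonneg (sub_nonneg.2 (hγ i).2) (hP i).le) hQ.le)]
    · rw [div_mul_cancel₀ _ hQ.ne']
  have hc2Q : c ^ 2 * Q = (α * Real.sqrt Q + ∑ i, Real.sqrt ((1 - γ i) * P i)) ^ 2 := by
    rw [← hcQ, mul_pow, Real.sq_sqrt hQ.le]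
  have hDV : σ2 + G + (α * Real.sqrt Q + ∑ i, Real.sqrt ((1 - γ i) * P i)) ^ 2 = V := by
    rw [hV, hc2Q]
  constructor
  · refine ⟨c * Q / V, ?_⟩
    rw [key, hDV]
    field_simp
    ring
  · rintro e ⟨a, rfl⟩
    rw [key, hDV, div_le_iff₀ hVpos]
    nlinarith [sq_nonneg (V * a - c * Q), sq_nonneg a, mul_nonneg hGnn hQ.le]
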